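/- arXiv:1408.1767 — 2 statements merged into one kernel-verified Lean document; each statement's English description precedes it below -/
import Mathlib

section
/- Fix ε ∈ (0,1), β ∈ (0,1), m ∈ ℕ, and ℓ ∈ ℕ. If n ≥ (2/ε)·(ln(m/β) + ℓ), then m·Σ_{i=0}^{ℓ−1} C(n,i)·ε^i·(1−ε)^{n−i} ≤ β, where C(n,i) is the binomial coefficient. -/
theorem stmt_12 (ε β : ℝ) (hε : ε ∈ Set.Ioo (0 : ℝ) 1) (hβ : β ∈ Set.Ioo (0 : ℝ) 1)
    (m ℓ n : ℕ) (hn : (n : ℝ) ≥ (2 / ε) * (Real.log (m / β) + ℓ)) :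
    (m : ℝ) * ∑ i ∈ Finset.range ℓ, (n.choose i : ℝ) * ε ^ i * (1 - ε) ^ (n - i) ≤ β := by
  obtain ⟨hε0, hε1⟩ := hε
  obtain ⟨hβ0, hβ1⟩ := hβ
  rcases Nat.eq_zero_or_pos m with hm | hm
  · simp [hm]; linarith
  have hm1 : (1:ℝ) ≤ m := Nat.one_le_cast.mpr hm
  have hm0 : (0:ℝ) < m := by linarith
  -- Step 1: tilt the sum
  have h1 : ∑ i ∈ Finset.range ℓ, (n.choose i : ℝ) * ε ^ i * (1 - ε) ^ (n - i)
      ≤ 2 ^ ℓ * ∑ i ∈ Finset.range ℓ,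
        (n.choose i : ℝ) * (ε/2) ^ i * (1 - ε) ^ (n - i) := by
    rw [Finset.mul_sum]
    apply Finset.sum_le_sum
    intro i hi
    have hi' : i < ℓ := Finset.mem_range.mp hi
    have key : ε ^ i ≤ 2 ^ ℓ * (ε/2) ^ i := by
      rw [div_pow]
      have h2i : (2:ℝ) ^ i ≤ 2 ^ ℓ := pow_le_pow_right₀ one_le_two hi'.le
      have h2ipos : (0:ℝ) < 2 ^ i := by positivity
      have hεi : (0:ℝ) ≤ ε ^ i := by positivity
      rw [mul_comm ((2:ℝ)^ℓ), div_mul_eq_mul_div, le_div_iff₀ h2ipos]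
      nlinarith
    calc (n.choose i : ℝ) * ε ^ i * (1 - ε) ^ (n - i)
        ≤ (n.choose i : ℝ) * (2 ^ ℓ * (ε/2) ^ i) * (1 - ε) ^ (n - i) := by
          apply mul_le_mul_of_nonneg_right _ (pow_nonneg (by linarith) _)
          exact mul_le_mul_of_nonneg_left key (by positivity)
      _ = 2 ^ ℓ * ((n.choose i : ℝ) * (ε/2) ^ i * (1 - ε) ^ (n - i)) := by ring
  -- Step 2: the tilted sum is ≤ (1 - ε/2)^n by the binomial theorem
  have h2 : ∑ i ∈ Finset.range ℓ, (n.choose i : ℝ) * (ε/2) ^ i * (1 - ε) ^ (n - i)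
      ≤ (1 - ε/2) ^ n := by
    have hsub : Finset.range ℓ ⊆ Finset.range (max ℓ (n+1)) :=
      Finset.range_subset_range.mpr (le_max_left _ _)
    have hle : ∑ i ∈ Finset.range ℓ, (n.choose i : ℝ) * (ε/2) ^ i * (1 - ε) ^ (n - i)
        ≤ ∑ i ∈ Finset.range (max ℓ (n+1)),
          (n.choose i : ℝ) * (ε/2) ^ i * (1 - ε) ^ (n - i) := by
      apply Finset.sum_le_sum_of_subset_of_nonneg hsub
      intro i _ _
      have := pow_nonneg (show (0:ℝ) ≤ 1 - ε by linarith) (n - i)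
      positivity
    have heq : ∑ i ∈ Finset.range (max ℓ (n+1)),
        (n.choose i : ℝ) * (ε/2) ^ i * (1 - ε) ^ (n - i)
        = ∑ i ∈ Finset.range (n+1),
          (n.choose i : ℝ) * (ε/2) ^ i * (1 - ε) ^ (n - i) := by
      symm
      apply Finset.sum_subset (Finset.range_subset_range.mpr (le_max_right _ _))
      intro i _ hni
      have : n < i := by
        simp only [Finset.mem_range, not_lt] at hni
        omega
      rw [Nat.choose_eq_zero_of_lt this]
      simp
    have hbin : ∑ i ∈ Finset.range (n+1),
        (n.choose i : ℝ) * (ε/2) ^ i * (1 - ε) ^ (n - i) = (1 - ε/2) ^ n := by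
      have hb := add_pow (ε/2) (1 - ε) n
      have h11 : (ε/2 + (1 - ε)) = (1 - ε/2 : ℝ) := by ring
      rw [h11] at hb
      rw [hb]
      apply Finset.sum_congr rfl
      intro i _
      ring
    exact hle.trans (le_of_eq (heq.trans hbin))
  -- Step 3: conclude via exponential bounds
  have hεn : Real.log m - Real.log β + ℓ ≤ ε * n / 2 := by
    have h := mul_le_mul_of_nonneg_left hn (le_of_lt (half_pos hε0))
    rw [Real.log_div (by positivity) (by positivity)] at h
    have heq : (ε/2) * ((2/ε) * (Real.log m - Real.log β + ℓ)) =
        Real.log m - Real.log β + ℓ := by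
      field_simp
    nlinarith [h, heq]
  have hexp1 : (2:ℝ) ^ ℓ ≤ Real.exp ℓ := by
    calc (2:ℝ) ^ ℓ ≤ (Real.exp 1) ^ ℓ := by
          apply pow_le_pow_left₀ (by norm_num)
          linarith [Real.add_one_le_exp 1]
      _ = Real.exp ℓ := by
          rw [← Real.exp_nat_mul]
          ring_nf
  have hexp2 : (1 - ε/2) ^ n ≤ Real.exp (-(ε * n / 2)) := by
    calc (1 - ε/2) ^ n ≤ (Real.exp (-(ε/2))) ^ n := by
          apply pow_le_pow_left₀ (by linarith)
          linarith [Real.add_one_le_exp (-(ε/2))]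
      _ = Real.exp (-(ε * n / 2)) := by
          rw [← Real.exp_nat_mul]
          ring_nf
  have hfinal : (m : ℝ) * (2 ^ ℓ * (1 - ε/2) ^ n) ≤ β := by
    have hpow_nonneg : (0:ℝ) ≤ (1 - ε/2) ^ n := pow_nonneg (by linarith) _
    have step : (m : ℝ) * (2 ^ ℓ * (1 - ε/2) ^ n)
        ≤ (m : ℝ) * (Real.exp ℓ * Real.exp (-(ε * n / 2))) := by
      apply mul_le_mul_of_nonneg_left _ (le_of_lt hm0)
      apply mul_le_mul hexp1 hexp2 hpow_nonneg (le_of_lt (Real.exp_pos _))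
    refine step.trans ?_
    have : (m : ℝ) * (Real.exp ℓ * Real.exp (-(ε * n / 2)))
        = Real.exp (Real.log m + ℓ + (-(ε * n / 2))) := by
      rw [Real.exp_add, Real.exp_add, Real.exp_log hm0]
      ring
    rw [this, ← Real.exp_log hβ0]
    apply Real.exp_le_exp.mpr
    linarith
  calc (m : ℝ) * ∑ i ∈ Finset.range ℓ, (n.choose i : ℝ) * ε ^ i * (1 - ε) ^ (n - i)
      ≤ (m : ℝ) * (2 ^ ℓ * ∑ i ∈ Finset.range ℓ,
        (n.choose i : ℝ) * (ε/2) ^ i * (1 - ε) ^ (n - i)) :=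
        mul_le_mul_of_nonneg_left h1 (le_of_lt hm0)
    _ ≤ (m : ℝ) * (2 ^ ℓ * (1 - ε/2) ^ n) := by
        apply mul_le_mul_of_nonneg_left _ (le_of_lt hm0)
        exact mul_le_mul_of_nonneg_left h2 (by positivity)
    _ ≤ β := hfinal
end

section
/- Let X be a compact subset of R^q and φ : X × S → ℝ a function on X times a measurable space S such that φ(·, s) is L-Lipschitz for every s (with respect to a norm on R^q) and φ is uniformly bounded. If x_1, x_2, ... are i.i.d. S-valued random variables, then the uniform empirical error e_n := sup_{θ ∈ X} ( (1/n) Σ_{i=1}^n φ(θ, x_i) − E[φ(θ, x_1)] ) converges to 0 almost surely as n → ∞. -/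
open MeasureTheory Filter

theorem stmt_19 (q : ℕ) (S : Type*) [MeasurableSpace S]
    (Ω : Type*) [MeasurableSpace Ω] (μ : Measure Ω) [IsProbabilityMeasure μ]
    (x : ℕ → Ω → S) (hmeas : ∀ i, Measurable (x i))
    (hindep : ProbabilityTheory.iIndepFun x μ)
    (hident : ∀ i, ProbabilityTheory.IdentDistrib (x i) (x 0) μ μ)
    (X : Set (Fin q → ℝ)) (hX : IsCompact X)
    (φ : (Fin q → ℝ) → S → ℝ) (L M : ℝ)
    (hφmeas : ∀ θ, Measurable (φ θ))
    (hφbdd : ∀ θ s, |φ θ s| ≤ M)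
    (hφLip : ∀ s : S, ∀ θ ∈ X, ∀ θ' ∈ X, |φ θ s - φ θ' s| ≤ L * ‖θ - θ'‖)
    (e : ℕ → Ω → ℝ)
    (he : ∀ n ω, e n ω = sSup ((fun θ =>
      (1 / (n : ℝ)) * ∑ i ∈ Finset.range n, φ θ (x i ω) -
        ∫ ω', φ θ (x 0 ω') ∂μ) '' X)) :
    ∀ᵐ ω ∂μ, Tendsto (fun n => e n ω) atTop (nhds 0) := by
  rcases Set.eq_empty_or_nonempty X with hXe | ⟨θ0, hθ0⟩
  · have hz : ∀ n ω, e n ω = 0 := by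
      intro n ω; rw [he]; simp [hXe, Real.sSup_empty]
    filter_upwards with ω
    simp only [hz]
    exact tendsto_const_nhds
  set L' := max L 0 with hL'
  have hL'0 : 0 ≤ L' := le_max_right _ _
  set g : (Fin q → ℝ) → ℕ → Ω → ℝ :=
    fun θ n ω => (1 / (n : ℝ)) * ∑ i ∈ Finset.range n, φ θ (x i ω) with hg
  set m : (Fin q → ℝ) → ℝ := fun θ => ∫ ω', φ θ (x 0 ω') ∂μ with hm
  -- integrability
  have hint : ∀ θ, Integrable (fun ω => φ θ (x 0 ω)) μ := fun θ =>
    ⟨((hφmeas θ).comp (hmeas 0)).aestronglyMeasurable,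
     HasFiniteIntegral.of_bounded (C := M)
       (ae_of_all _ fun ω => by simpa [Real.norm_eq_abs] using hφbdd θ (x 0 ω))⟩
  -- strong law at each fixed θ
  have slln : ∀ θ : Fin q → ℝ,
      ∀ᵐ ω ∂μ, Tendsto (fun n => g θ n ω) atTop (nhds (m θ)) := by
    intro θ
    have hpind : Pairwise (Function.onFun (ProbabilityTheory.IndepFun · · μ) fun i ω => φ θ (x i ω)) := by
      intro i j hij
      exact (hindep.indepFun hij).comp (hφmeas θ) (hφmeas θ)
    have hid : ∀ i, ProbabilityTheory.IdentDistrib (fun ω => φ θ (x i ω))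
        (fun ω => φ θ (x 0 ω)) μ μ := fun i => (hident i).comp (hφmeas θ)
    have H := ProbabilityTheory.strong_law_ae_real (μ := μ)
      (fun i ω => φ θ (x i ω)) (hint θ) hpind hid
    filter_upwards [H] with ω hω
    have : (fun n : ℕ => (∑ i ∈ Finset.range n, φ θ (x i ω)) / n)
        = fun n => g θ n ω := by
      funext n; simp [hg]; ring
    rwa [this] at hω
  -- Lipschitz bounds
  have hg_lip : ∀ (n : ℕ) (ω : Ω), ∀ θ ∈ X, ∀ θ' ∈ X,
      |g θ n ω - g θ' n ω| ≤ L' * ‖θ - θ'‖ := by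
    intro n ω θ hθ θ' hθ'
    have hnn : 0 ≤ L' * ‖θ - θ'‖ := mul_nonneg hL'0 (norm_nonneg _)
    rcases Nat.eq_zero_or_pos n with rfl | hn
    · simp [hg, hnn]
    have hsum : g θ n ω - g θ' n ω
        = (1 / (n : ℝ)) * ∑ i ∈ Finset.range n, (φ θ (x i ω) - φ θ' (x i ω)) := by
      simp [hg, Finset.sum_sub_distrib, mul_sub]
    have h1 : |∑ i ∈ Finset.range n, (φ θ (x i ω) - φ θ' (x i ω))|
        ≤ (n : ℝ) * (L' * ‖θ - θ'‖) := by
      calc |∑ i ∈ Finset.range n, (φ θ (x i ω) - φ θ' (x i ω))|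
          ≤ ∑ i ∈ Finset.range n, |φ θ (x i ω) - φ θ' (x i ω)| :=
            Finset.abs_sum_le_sum_abs _ _
        _ ≤ ∑ _i ∈ Finset.range n, L' * ‖θ - θ'‖ := by
            refine Finset.sum_le_sum fun i _ => (hφLip (x i ω) θ hθ θ' hθ').trans ?_
            exact mul_le_mul_of_nonneg_right (le_max_left _ _) (norm_nonneg _)
        _ = (n : ℝ) * (L' * ‖θ - θ'‖) := by
            simp [Finset.sum_const, nsmul_eq_mul]
    have hnpos : (0 : ℝ) < n := by exact_mod_cast hn
    rw [hsum, abs_mul, abs_of_nonneg (by positivity : (0:ℝ) ≤ 1 / (n:ℝ))]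
    calc (1 / (n : ℝ)) * |∑ i ∈ Finset.range n, (φ θ (x i ω) - φ θ' (x i ω))|
        ≤ (1 / (n : ℝ)) * ((n : ℝ) * (L' * ‖θ - θ'‖)) := by
          exact mul_le_mul_of_nonneg_left h1 (by positivity)
      _ = L' * ‖θ - θ'‖ := by field_simp
  have hm_lip : ∀ θ ∈ X, ∀ θ' ∈ X, |m θ - m θ'| ≤ L' * ‖θ - θ'‖ := by
    intro θ hθ θ' hθ'
    have hsub : m θ - m θ' = ∫ ω', (φ θ (x 0 ω') - φ θ' (x 0 ω')) ∂μ :=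
      (integral_sub (hint θ) (hint θ')).symm
    rw [hsub]
    have hptwise : ∀ ω' : Ω, ‖φ θ (x 0 ω') - φ θ' (x 0 ω')‖ ≤ L' * ‖θ - θ'‖ := by
      intro ω'
      rw [Real.norm_eq_abs]
      exact (hφLip (x 0 ω') θ hθ θ' hθ').trans
        (mul_le_mul_of_nonneg_right (le_max_left _ _) (norm_nonneg _))
    have hb := norm_integral_le_of_norm_le_const (μ := μ)
      (f := fun ω' => φ θ (x 0 ω') - φ θ' (x 0 ω')) (ae_of_all _ hptwise)
    simpa [Real.norm_eq_abs, measure_univ] using hb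
  -- finite nets
  have hnet : ∀ k : ℕ, ∃ T : Set (Fin q → ℝ), T ⊆ X ∧ T.Finite ∧
      X ⊆ ⋃ t ∈ T, Metric.ball t (1 / ((k : ℝ) + 1)) :=
    fun k => hX.finite_cover_balls (by positivity)
  choose T hTX hTfin hTcov using hnet
  have hae : ∀ᵐ ω ∂μ,
      (∀ k, ∀ t ∈ T k, Tendsto (fun n => g t n ω) atTop (nhds (m t))) ∧
        Tendsto (fun n => g θ0 n ω) atTop (nhds (m θ0)) := by
    refine (ae_all_iff.2 fun k => ?_).and (slln θ0)
    exact (ae_ball_iff (hTfin k).countable).2 fun t _ => slln t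
  filter_upwards [hae] with ω hω
  rw [Metric.tendsto_atTop]
  intro ε hε
  -- choose a net fine enough
  obtain ⟨k, hk⟩ := exists_nat_one_div_lt
    (show (0:ℝ) < ε / (2 * (2 * L' + 1)) by positivity)
  have hδpos : (0:ℝ) < 1 / ((k : ℝ) + 1) := by positivity
  have hδ : 2 * L' * (1 / ((k : ℝ) + 1)) < ε / 2 := by
    have h1 : ((k : ℝ) + 1) = ((k : ℕ) : ℝ) + 1 := by norm_num
    have h2 : 1 / ((k : ℝ) + 1) < ε / (2 * (2 * L' + 1)) := by
      rw [h1]; exact hk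
    have h3 : (2 * L' + 1) * (1 / ((k : ℝ) + 1))
        < (2 * L' + 1) * (ε / (2 * (2 * L' + 1))) :=
      mul_lt_mul_of_pos_left h2 (by positivity)
    have h4 : (2 * L' + 1) * (ε / (2 * (2 * L' + 1))) = ε / 2 := by
      field_simp
    nlinarith [hδpos, h3, h4]
  -- eventual closeness at net points and at θ0
  have hEv : ∀ᶠ n in atTop, ∀ t ∈ T k, |g t n ω - m t| < ε / 2 := by
    refine (eventually_all_finite (hTfin k)).2 fun t ht => ?_
    have := (Metric.tendsto_atTop.1 (hω.1 k t ht)) (ε / 2) (by positivity)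
    obtain ⟨N, hN⟩ := this
    exact eventually_atTop.2 ⟨N, fun n hn => by
      simpa [Real.dist_eq] using hN n hn⟩
  have hEv0 : ∀ᶠ n in atTop, |g θ0 n ω - m θ0| < ε := by
    have := (Metric.tendsto_atTop.1 hω.2) ε hε
    obtain ⟨N, hN⟩ := this
    exact eventually_atTop.2 ⟨N, fun n hn => by
      simpa [Real.dist_eq] using hN n hn⟩
  obtain ⟨N, hN⟩ := eventually_atTop.1 (hEv.and hEv0)
  refine ⟨N, fun n hn => ?_⟩
  obtain ⟨h1, h2⟩ := hN n hn
  -- pointwise upper bound on X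
  have hub : ∀ θ ∈ X, g θ n ω - m θ ≤ 2 * L' * (1 / ((k : ℝ) + 1)) + ε / 2 := by
    intro θ hθ
    obtain ⟨t, ht, hball⟩ := Set.mem_iUnion₂.1 (hTcov k hθ)
    have htX : t ∈ X := hTX k ht
    have hd : ‖θ - t‖ < 1 / ((k : ℝ) + 1) := by
      simpa [dist_eq_norm] using Metric.mem_ball.1 hball
    have e1 : g θ n ω - g t n ω ≤ L' * ‖θ - t‖ :=
      (le_abs_self _).trans (hg_lip n ω θ hθ t htX)
    have e2 : g t n ω - m t ≤ ε / 2 := (le_abs_self _).trans (h1 t ht).le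
    have e3 : m t - m θ ≤ L' * ‖θ - t‖ := by
      have h := hm_lip t htX θ hθ
      rw [norm_sub_rev] at h
      exact (le_abs_self _).trans h
    have e4 : L' * ‖θ - t‖ ≤ L' * (1 / ((k : ℝ) + 1)) :=
      mul_le_mul_of_nonneg_left hd.le hL'0
    nlinarith
  -- the sup is bounded
  have hne : ((fun θ => g θ n ω - m θ) '' X).Nonempty := ⟨_, ⟨θ0, hθ0, rfl⟩⟩
  have hbdd : BddAbove ((fun θ => g θ n ω - m θ) '' X) := by
    refine ⟨2 * L' * (1 / ((k : ℝ) + 1)) + ε / 2, ?_⟩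
    rintro y ⟨θ, hθ, rfl⟩
    exact hub θ hθ
  have heq : e n ω = sSup ((fun θ => g θ n ω - m θ) '' X) := he n ω
  have hup : e n ω ≤ 2 * L' * (1 / ((k : ℝ) + 1)) + ε / 2 := by
    rw [heq]
    exact csSup_le hne (by rintro y ⟨θ, hθ, rfl⟩; exact hub θ hθ)
  have hlow : g θ0 n ω - m θ0 ≤ e n ω := by
    rw [heq]
    exact le_csSup hbdd ⟨θ0, hθ0, rfl⟩
  have hlow2 : -ε < e n ω := by
    have : -ε < g θ0 n ω - m θ0 := (abs_lt.1 h2).1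
    linarith
  rw [Real.dist_eq, sub_zero]
  rw [abs_lt]
  constructor
  · linarith
  · linarith
end
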